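/- Let (A, M, H1) be a sparse approximation triple with sparse approximation ratio a_A, let H2 be a Hilbert space, T ∈ B(H1,H2) satisfy the restricted isometry property on 2A with δ_{2A}(T) < √2/2, and let F : H1 → H2 be continuous with F(0) = 0, γ_{F,T}(2A) < √2/2 − √(δ_{2A}(T)), and γ_{F,T}(4A) < ∞. Then F is almost linear on A: for all x, y ∈ M, ‖F(x) − F(y) − F(x−y)‖ ≤ 2γ_{F,T}(4A)·‖x−y‖_{H1} + 2(γ_{F,T}(2A) + γ_{F,T}(4A))·√a_A·(σ_{A,M}(x) + σ_{A,M}(y)). -/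

import Mathlib

/-- A set-valued "best approximator": `y` is a best approximation of `x` in `K` (w.r.t. the norm
of `M`). -/
def IsBestApprox {M : Type*} [NormedAddCommGroup M] (K : Set M) (x y : M) : Prop :=
  y ∈ K ∧ ∀ z ∈ K, ‖x - y‖ ≤ ‖x - z‖

/-- A sparse approximation triple `(A, M, H1)`: the Banach space `M` is continuously embedded
into the Hilbert space `H1` via `j` with embedding norm at most one, `A = ⋃ i, A_i` is a union of
closed linear subspaces, every nonempty closed subset of `M` is proximinal, best approximators
onto each `A_i` w.r.t. the `M`-norm are also best approximators w.r.t. the `H1`-norm, the norms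
split along such best approximators, and `⋃_{k ≥ 1} kA` is dense in `H1`. -/
structure SparseApproxTriple (H1 : Type*) [NormedAddCommGroup H1] [InnerProductSpace ℝ H1]
    (M : Type*) [NormedAddCommGroup M] [NormedSpace ℝ M] (I : Type*) where
  /-- the (injective, norm at most one) embedding of `M` into `H1` -/
  j : M →ₗ[ℝ] H1
  j_inj : Function.Injective j
  j_norm_le : ∀ x : M, ‖j x‖ ≤ ‖x‖
  /-- the subspaces whose union is `A` -/
  Asub : I → Submodule ℝ M
  index_nonempty : Nonempty I
  Asub_closed : ∀ i : I, IsClosed (Asub i : Set M)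
  A_closed : IsClosed (⋃ i : I, (Asub i : Set M))
  /-- proximinality: every nonempty closed subset of `M` is proximinal -/
  prox : ∀ K : Set M, K.Nonempty → IsClosed K → ∀ x : M, ∃ y ∈ K, ∀ z ∈ K, ‖x - y‖ ≤ ‖x - z‖
  /-- common best approximator property -/
  common_best : ∀ (i : I) (x y : M), y ∈ Asub i → (∀ z ∈ Asub i, ‖x - y‖ ≤ ‖x - z‖) →
    ∀ z ∈ Asub i, ‖j x - j y‖ ≤ ‖j x - j z‖
  /-- norm splitting in `M` -/
  norm_split_M : ∀ (i : I) (x y : M), y ∈ Asub i → (∀ z ∈ Asub i, ‖x - y‖ ≤ ‖x - z‖) →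
    ‖x‖ = ‖y‖ + ‖x - y‖
  /-- norm splitting in `H1` -/
  norm_split_H : ∀ (i : I) (x y : M), y ∈ Asub i → (∀ z ∈ Asub i, ‖x - y‖ ≤ ‖x - z‖) →
    ‖j x‖ ^ 2 = ‖j y‖ ^ 2 + ‖j x - j y‖ ^ 2
  /-- the embedding of `A` into `M` is bounded (so that the sparsity `s_A` is finite) -/
  sA_bddAbove : BddAbove
    {r : ℝ | ∃ x : M, x ∈ (⋃ i : I, (Asub i : Set M)) ∧ x ≠ 0 ∧ r = ‖x‖ / ‖j x‖}
  /-- sparse density: `⋃_{k ≥ 1} kA` is dense in `H1` -/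
  sparse_dense : Dense (⋃ k : ℕ, {u : H1 | ∃ f : Fin (k + 1) → M,
    (∀ n, f n ∈ ⋃ i : I, (Asub i : Set M)) ∧ u = ∑ n, j (f n)})

namespace SparseApproxTriple

variable {H1 : Type*} [NormedAddCommGroup H1] [InnerProductSpace ℝ H1]
  {M : Type*} [NormedAddCommGroup M] [NormedSpace ℝ M] {I : Type*}

/-- The union `A = ⋃ i, A_i`, as a subset of `M`. -/
def A (S : SparseApproxTriple H1 M I) : Set M := ⋃ i : I, (S.Asub i : Set M)

/-- `σ_{A,M}(x) := inf_{z ∈ A} ‖x − z‖_M`, the best sparse approximation error. -/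
noncomputable def sigma (S : SparseApproxTriple H1 M I) (x : M) : ℝ :=
  sInf ((fun z => ‖x - z‖) '' S.A)

/-- The sparsity `s_A := (sup_{0 ≠ x ∈ A} ‖x‖_M/‖x‖_{H1})²`. -/
noncomputable def sA (S : SparseApproxTriple H1 M I) : ℝ :=
  (sSup {r : ℝ | ∃ x : M, x ∈ S.A ∧ x ≠ 0 ∧ r = ‖x‖ / ‖S.j x‖}) ^ 2

/-- The sparse approximation ratio
`a_A := sup_{0 ≠ x ∈ M} (‖u_{A,M}‖_{H1}/‖x_{A,M}‖_M)²`, where `x_{A,M}` is a best approximator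
of `x` in `A` and `u_{A,M}` a best approximator of `x − x_{A,M}` in `A` (both w.r.t. the norm of
`M`). -/
noncomputable def aA (S : SparseApproxTriple H1 M I) : ℝ :=
  sSup {r : ℝ | ∃ x xa u : M, x ≠ 0 ∧ IsBestApprox S.A x xa ∧
    IsBestApprox S.A (x - xa) u ∧ r = (‖S.j u‖ / ‖xa‖) ^ 2}

/-- `kA := {x₁ + ⋯ + x_k : x₁, …, x_k ∈ A}`. -/
def sumSet (S : SparseApproxTriple H1 M I) (k : ℕ) : Set M :=
  {x : M | ∃ f : Fin k → M, (∀ n, f n ∈ S.A) ∧ x = ∑ n, f n}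

end SparseApproxTriple
open scoped RealInnerProductSpace
open Filter Topology

namespace SparseApproxTriple

variable {H1 : Type*} [NormedAddCommGroup H1] [InnerProductSpace ℝ H1]
  {M : Type*} [NormedAddCommGroup M] [NormedSpace ℝ M] {I : Type*}
  (S : SparseApproxTriple H1 M I)

lemma zero_mem_A : (0 : M) ∈ S.A := by
  obtain ⟨i⟩ := S.index_nonempty
  exact Set.mem_iUnion.2 ⟨i, (S.Asub i).zero_mem⟩

lemma A_nonempty : S.A.Nonempty := ⟨0, S.zero_mem_A⟩

lemma neg_mem_A {a : M} (ha : a ∈ S.A) : -a ∈ S.A := by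
  obtain ⟨i, hi⟩ := Set.mem_iUnion.1 ha
  exact Set.mem_iUnion.2 ⟨i, (S.Asub i).neg_mem hi⟩

lemma exists_best (x : M) : ∃ y, IsBestApprox S.A x y := by
  obtain ⟨y, hy, hb⟩ := S.prox S.A S.A_nonempty S.A_closed x
  exact ⟨y, hy, hb⟩

noncomputable def best (x : M) : M := Classical.choose (S.exists_best x)

lemma best_spec (x : M) : IsBestApprox S.A x (S.best x) :=
  Classical.choose_spec (S.exists_best x)

lemma best_sub {x b : M} (h : IsBestApprox S.A x b) :
    ∃ i, b ∈ S.Asub i ∧ ∀ z ∈ S.Asub i, ‖x - b‖ ≤ ‖x - z‖ := by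
  obtain ⟨hb, hmin⟩ := h
  obtain ⟨i, hi⟩ := Set.mem_iUnion.1 hb
  exact ⟨i, hi, fun z hz => hmin z (Set.mem_iUnion.2 ⟨i, hz⟩)⟩

lemma split_M {x b : M} (h : IsBestApprox S.A x b) : ‖x‖ = ‖b‖ + ‖x - b‖ := by
  obtain ⟨i, hi, hmin⟩ := S.best_sub h
  exact S.norm_split_M i x b hi hmin

lemma split_H {x b : M} (h : IsBestApprox S.A x b) :
    ‖S.j x‖ ^ 2 = ‖S.j b‖ ^ 2 + ‖S.j (x - b)‖ ^ 2 := by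
  obtain ⟨i, hi, hmin⟩ := S.best_sub h
  have := S.norm_split_H i x b hi hmin
  rwa [← map_sub] at this

lemma best_of_zero {b : M} (h : IsBestApprox S.A 0 b) : b = 0 := by
  have := h.2 0 S.zero_mem_A
  simp only [sub_zero, zero_sub, norm_neg, norm_zero] at this
  exact norm_le_zero_iff.1 this

/-- The key orthogonality estimate: if `c` is a best approximator of `u` in `A`, then the inner
product of `j u` with any `j z`, `z ∈ A`, is at most `‖c‖ ‖j z‖`. -/
lemma step_inner {u c : M} (h : IsBestApprox S.A u c) {z : M} (hz : z ∈ S.A) :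
    |⟪S.j u, S.j z⟫| ≤ ‖c‖ * ‖S.j z‖ := by
  obtain ⟨i, hzi⟩ := Set.mem_iUnion.1 hz
  obtain ⟨a, ha, hamin⟩ := S.prox (S.Asub i) ⟨0, (S.Asub i).zero_mem⟩ (S.Asub_closed i) u
  have hsplit := S.norm_split_M i u a ha hamin
  have h2 := S.split_M h
  have hle : ‖u - c‖ ≤ ‖u - a‖ := h.2 a (Set.mem_iUnion.2 ⟨i, ha⟩)
  have hac : ‖a‖ ≤ ‖c‖ := by linarith
  have hH := S.common_best i u a ha hamin
  set K : Submodule ℝ H1 := (S.Asub i).map S.j with hK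
  have hvK : S.j a ∈ K := ⟨a, ha, rfl⟩
  have : Nonempty (K : Set H1) := ⟨⟨_, hvK⟩⟩
  have hmin' : ‖S.j u - S.j a‖ = ⨅ w : (K : Set H1), ‖S.j u - w‖ := by
    refine le_antisymm (le_ciInf ?_) (ciInf_le (f := fun w : (K : Set H1) => ‖S.j u - w‖) ⟨0, ?_⟩ ⟨S.j a, hvK⟩)
    · rintro ⟨w, zw, hzw, rfl⟩
      exact hH zw hzw
    · rintro r ⟨w, rfl⟩
      positivity
  have horth := (Submodule.norm_eq_iInf_iff_real_inner_eq_zero K hvK).1 hmin'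
  have h0 : ⟪S.j u - S.j a, S.j z⟫ = 0 := horth _ ⟨z, hzi, rfl⟩
  have heq : ⟪S.j u, S.j z⟫ = ⟪S.j a, S.j z⟫ := by
    have := inner_sub_left (𝕜 := ℝ) (S.j u) (S.j a) (S.j z)
    rw [h0] at this
    linarith [this.symm]
  rw [heq]
  calc |⟪S.j a, S.j z⟫| ≤ ‖S.j a‖ * ‖S.j z‖ := abs_real_inner_le_norm _ _
    _ ≤ ‖c‖ * ‖S.j z‖ := by
        have := S.j_norm_le a
        have := norm_nonneg (S.j z)
        nlinarith

lemma best2_norm_le {x xa u : M} (h1 : IsBestApprox S.A x xa)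
    (h2 : IsBestApprox S.A (x - xa) u) : ‖u‖ ≤ ‖xa‖ := by
  have e1 := S.split_M h1
  have e2 := S.split_M h2
  have h3 : ‖x - xa‖ ≤ ‖x - u‖ := h1.2 u h2.1
  have h4 : ‖x - u‖ ≤ ‖x - xa - u‖ + ‖xa‖ := by
    have hxy : x - u = (x - xa - u) + xa := by abel
    rw [hxy]; exact norm_add_le _ _
  linarith

lemma aA_bddAbove : BddAbove {r : ℝ | ∃ x xa u : M, x ≠ 0 ∧ IsBestApprox S.A x xa ∧
    IsBestApprox S.A (x - xa) u ∧ r = (‖S.j u‖ / ‖xa‖) ^ 2} := by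
  refine ⟨1, ?_⟩
  rintro r ⟨x, xa, u, hx, h1, h2, rfl⟩
  have hle : ‖u‖ ≤ ‖xa‖ := S.best2_norm_le h1 h2
  have hju : ‖S.j u‖ ≤ ‖xa‖ := (S.j_norm_le u).trans hle
  rcases eq_or_ne (‖xa‖) 0 with h0 | h0
  · simp [h0]
  · have hd : ‖S.j u‖ / ‖xa‖ ≤ 1 := by
      rw [div_le_one (lt_of_le_of_ne (norm_nonneg _) (Ne.symm h0))]
      exact hju
    have : 0 ≤ ‖S.j u‖ / ‖xa‖ := by positivity
    nlinarith

lemma aA_nonneg : 0 ≤ S.aA :=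
  Real.sSup_nonneg (by rintro r ⟨x, xa, u, hx, h1, h2, rfl⟩; positivity)

lemma sqrt_aA_nonneg : 0 ≤ Real.sqrt S.aA := Real.sqrt_nonneg _

lemma j_best2_le {x xa u : M} (h1 : IsBestApprox S.A x xa)
    (h2 : IsBestApprox S.A (x - xa) u) : ‖S.j u‖ ≤ Real.sqrt S.aA * ‖xa‖ := by
  rcases eq_or_ne (‖xa‖) 0 with h0 | h0
  · have hu : ‖u‖ = 0 := le_antisymm (h0 ▸ S.best2_norm_le h1 h2) (norm_nonneg _)
    have hju : ‖S.j u‖ = 0 :=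
      le_antisymm ((S.j_norm_le u).trans hu.le) (norm_nonneg _)
    rw [hju, h0, mul_zero]
  rcases eq_or_ne x 0 with rfl | hx
  · exact absurd (congrArg norm (S.best_of_zero h1)) (by simpa using h0)
  · have hmem : (‖S.j u‖ / ‖xa‖) ^ 2 ∈ {r : ℝ | ∃ x xa u : M, x ≠ 0 ∧
        IsBestApprox S.A x xa ∧ IsBestApprox S.A (x - xa) u ∧
        r = (‖S.j u‖ / ‖xa‖) ^ 2} := ⟨x, xa, u, hx, h1, h2, rfl⟩
    have hle : (‖S.j u‖ / ‖xa‖) ^ 2 ≤ S.aA := le_csSup S.aA_bddAbove hmem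
    have hxa : (0:ℝ) < ‖xa‖ := lt_of_le_of_ne (norm_nonneg _) (Ne.symm h0)
    have h1' : ‖S.j u‖ ^ 2 ≤ S.aA * ‖xa‖ ^ 2 := by
      rw [div_pow, div_le_iff₀ (by positivity)] at hle
      linarith
    calc ‖S.j u‖ = Real.sqrt (‖S.j u‖ ^ 2) := (Real.sqrt_sq (norm_nonneg _)).symm
      _ ≤ Real.sqrt (S.aA * ‖xa‖ ^ 2) := Real.sqrt_le_sqrt h1'
      _ = Real.sqrt S.aA * ‖xa‖ := by
          rw [Real.sqrt_mul S.aA_nonneg, Real.sqrt_sq (norm_nonneg _)]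

lemma sigma_eq {x b : M} (h : IsBestApprox S.A x b) : S.sigma x = ‖x - b‖ := by
  refine le_antisymm (csInf_le ⟨0, ?_⟩ ⟨b, h.1, rfl⟩)
    (le_csInf ⟨‖x - b‖, b, h.1, rfl⟩ ?_)
  · rintro r ⟨z, hz, rfl⟩; positivity
  · rintro r ⟨z, hz, rfl⟩; exact h.2 z hz

lemma sigma_nonneg (x : M) : 0 ≤ S.sigma x := by
  rw [S.sigma_eq (S.best_spec x)]; positivity

end SparseApproxTriple
namespace SparseApproxTriple

variable {H1 : Type*} [NormedAddCommGroup H1] [InnerProductSpace ℝ H1]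
  {M : Type*} [NormedAddCommGroup M] [NormedSpace ℝ M] {I : Type*}

/-- greedy residual sequence -/
noncomputable def res (S : SparseApproxTriple H1 M I) (x : M) : ℕ → M
  | 0 => x
  | n + 1 => res S x n - S.best (res S x n)

/-- greedy atoms -/
noncomputable def ga (S : SparseApproxTriple H1 M I) (x : M) (n : ℕ) : M :=
  S.best (S.res x n)

variable (S : SparseApproxTriple H1 M I) (x : M)

lemma res_zero : S.res x 0 = x := rfl

lemma res_succ (n : ℕ) : S.res x (n + 1) = S.res x n - S.ga x n := rfl

lemma ga_best (n : ℕ) : IsBestApprox S.A (S.res x n) (S.ga x n) := S.best_spec _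

lemma ga_mem (n : ℕ) : S.ga x n ∈ S.A := (S.ga_best x n).1

lemma res_norm_split (n : ℕ) :
    ‖S.res x n‖ = ‖S.ga x n‖ + ‖S.res x (n + 1)‖ := by
  rw [res_succ]; exact S.split_M (S.ga_best x n)

lemma res_norm_antitone : Antitone fun n => ‖S.res x n‖ := by
  refine antitone_nat_of_succ_le fun n => ?_
  have := S.res_norm_split x n
  have := norm_nonneg (S.ga x n)
  linarith

lemma res_j_split (n : ℕ) :
    ‖S.j (S.res x n)‖ ^ 2 = ‖S.j (S.ga x n)‖ ^ 2 + ‖S.j (S.res x (n + 1))‖ ^ 2 := by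
  rw [res_succ]; exact S.split_H (S.ga_best x n)

lemma res_j_antitone : Antitone fun n => ‖S.j (S.res x n)‖ := by
  refine antitone_nat_of_succ_le fun n => ?_
  have h := S.res_j_split x n
  have h1 := norm_nonneg (S.j (S.res x (n+1)))
  have h2 := norm_nonneg (S.j (S.res x n))
  nlinarith [sq_nonneg (‖S.j (S.ga x n)‖)]

lemma sum_ga_norm {m n : ℕ} (h : m ≤ n) :
    ∑ k ∈ Finset.Ico m n, ‖S.ga x k‖ = ‖S.res x m‖ - ‖S.res x n‖ := by
  induction n, h using Nat.le_induction with
  | base => simp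
  | succ n hmn ih =>
      rw [Finset.sum_Ico_succ_top hmn, ih]
      have := S.res_norm_split x n
      linarith

lemma sum_ga_norm_le {m n : ℕ} (h : m ≤ n) :
    ∑ k ∈ Finset.Ico m n, ‖S.ga x k‖ ≤ ‖S.res x m‖ := by
  rw [S.sum_ga_norm x h]
  have := norm_nonneg (S.res x n)
  linarith

lemma res_sub {m n : ℕ} (h : m ≤ n) :
    S.res x m - S.res x n = ∑ k ∈ Finset.Ico m n, S.ga x k := by
  induction n, h using Nat.le_induction with
  | base => simp
  | succ n hmn ih =>
      rw [Finset.sum_Ico_succ_top hmn, ← ih, res_succ]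
      abel

lemma ga_summable : Summable fun n => ‖S.ga x n‖ := by
  refine summable_of_sum_range_le (c := ‖x‖) (fun n => norm_nonneg _) fun n => ?_
  have h := S.sum_ga_norm_le x (Nat.zero_le n)
  rw [Finset.range_eq_Ico]; simpa [res_zero] using h

lemma ga_norm_tendsto : Filter.Tendsto (fun n => ‖S.ga x n‖) Filter.atTop (nhds 0) :=
  (S.ga_summable x).tendsto_atTop_zero

lemma res_inner_le (n : ℕ) {z : M} (hz : z ∈ S.A) :
    |(inner ℝ (S.j (S.res x n)) (S.j z) : ℝ)| ≤ ‖S.ga x n‖ * ‖S.j z‖ :=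
  S.step_inner (S.ga_best x n) hz

lemma ga_j_le (n : ℕ) :
    ‖S.j (S.ga x (n + 1))‖ ≤ Real.sqrt S.aA * ‖S.ga x n‖ := by
  have h2 : IsBestApprox S.A (S.res x n - S.ga x n) (S.ga x (n + 1)) := by
    rw [← res_succ]; exact S.ga_best x (n + 1)
  exact S.j_best2_le (S.ga_best x n) h2

end SparseApproxTriple
set_option linter.unusedSectionVars false

namespace SparseApproxTriple

open Filter Topology

variable {H1 : Type*} [NormedAddCommGroup H1] [InnerProductSpace ℝ H1]
  {M : Type*} [NormedAddCommGroup M] [NormedSpace ℝ M] {I : Type*}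
  [CompleteSpace H1]
  (S : SparseApproxTriple H1 M I) (x : M)

lemma res_norm_le (n : ℕ) : ‖S.res x n‖ ≤ ‖x‖ := by
  simpa [res_zero] using S.res_norm_antitone x (Nat.zero_le n)

lemma res_j_cauchy_est {m n : ℕ} (h : m ≤ n) :
    ‖S.j (S.res x m) - S.j (S.res x n)‖ ^ 2 ≤
      (‖S.j (S.res x m)‖ ^ 2 - ‖S.j (S.res x n)‖ ^ 2) + 2 * (‖S.ga x n‖ * ‖x‖) := by
  set u := S.j (S.res x m) with hu
  set v := S.j (S.res x n) with hv
  have hexp : ‖u - v‖ ^ 2 = ‖u‖ ^ 2 - ‖v‖ ^ 2 - 2 * (inner ℝ (u - v) v : ℝ) := by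
    have h1 := norm_sub_sq_real u v
    have h2 := inner_sub_left (𝕜 := ℝ) u v v
    have h3 := real_inner_self_eq_norm_sq v
    linarith
  have hdv : |(inner ℝ (u - v) v : ℝ)| ≤ ‖S.ga x n‖ * ‖x‖ := by
    have hsub : u - v = ∑ k ∈ Finset.Ico m n, S.j (S.ga x k) := by
      rw [hu, hv, ← map_sub, S.res_sub x h, map_sum]
    rw [hsub, sum_inner]
    refine (Finset.abs_sum_le_sum_abs _ _).trans ?_
    have hterm : ∀ k ∈ Finset.Ico m n,
        |(inner ℝ (S.j (S.ga x k)) v : ℝ)| ≤ ‖S.ga x n‖ * ‖S.ga x k‖ := by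
      intro k hk
      rw [real_inner_comm]
      refine (S.res_inner_le x n (S.ga_mem x k)).trans ?_
      have := S.j_norm_le (S.ga x k)
      have := norm_nonneg (S.ga x n)
      nlinarith
    refine (Finset.sum_le_sum hterm).trans ?_
    rw [← Finset.mul_sum]
    have hsum : ∑ k ∈ Finset.Ico m n, ‖S.ga x k‖ ≤ ‖x‖ :=
      (S.sum_ga_norm_le x h).trans (S.res_norm_le x m)
    have := norm_nonneg (S.ga x n)
    nlinarith
  have := abs_le.1 hdv
  linarith

lemma res_j_cauchy : CauchySeq fun n => S.j (S.res x n) := by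
  rw [Metric.cauchySeq_iff']
  intro ε hε
  set ρ : ℕ → ℝ := fun n => ‖S.j (S.res x n)‖ ^ 2 with hρ
  have hanti : Antitone ρ := fun a b hab => by
    have h1 := S.res_j_antitone x hab
    have h2 := norm_nonneg (S.j (S.res x b))
    simp only [hρ]
    nlinarith
  have hbdd : BddBelow (Set.range ρ) := ⟨0, by rintro r ⟨n, rfl⟩; positivity⟩
  have hL := tendsto_atTop_ciInf hanti hbdd
  set L := ⨅ n, ρ n with hLdef
  have hLle : ∀ n, L ≤ ρ n := fun n => ciInf_le hbdd n
  have h1 : ∀ᶠ n in atTop, ρ n < L + ε ^ 2 / 4 :=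
    hL.eventually_lt_const (lt_add_of_pos_right L (by positivity))
  have h2 : ∀ᶠ n in atTop, ‖S.ga x n‖ * ‖x‖ < ε ^ 2 / 4 := by
    have : Tendsto (fun n => ‖S.ga x n‖ * ‖x‖) atTop (𝓝 0) := by
      simpa using (S.ga_norm_tendsto x).mul_const ‖x‖
    exact this.eventually_lt_const (by positivity)
  obtain ⟨N, hN⟩ := eventually_atTop.1 (h1.and h2)
  refine ⟨N, fun n hn => ?_⟩
  have hest := S.res_j_cauchy_est x hn
  have hρN := (hN N le_rfl).1
  have hgan := (hN n hn).2
  have hLn := hLle n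
  have hsq : ‖S.j (S.res x N) - S.j (S.res x n)‖ ^ 2 < ε ^ 2 := by
    simp only [hρ] at hρN hLn
    nlinarith
  rw [dist_eq_norm, norm_sub_rev]
  have := norm_nonneg (S.j (S.res x N) - S.j (S.res x n))
  nlinarith

lemma res_j_tendsto_zero : Tendsto (fun n => S.j (S.res x n)) atTop (𝓝 0) := by
  obtain ⟨h, hh⟩ := cauchySeq_tendsto_of_complete (S.res_j_cauchy x)
  have hzero : ∀ z ∈ S.A, (inner ℝ h (S.j z) : ℝ) = 0 := by
    intro z hz
    have ht : Tendsto (fun n => (inner ℝ (S.j (S.res x n)) (S.j z) : ℝ)) atTop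
        (𝓝 (inner ℝ h (S.j z))) := hh.inner tendsto_const_nhds
    have ht0 : Tendsto (fun n => (inner ℝ (S.j (S.res x n)) (S.j z) : ℝ)) atTop (𝓝 0) := by
      refine squeeze_zero_norm (a := fun n => ‖S.ga x n‖ * ‖S.j z‖) (fun n => ?_) ?_
      · rw [Real.norm_eq_abs]
        exact S.res_inner_le x n hz
      · simpa using (S.ga_norm_tendsto x).mul_const ‖S.j z‖
    exact tendsto_nhds_unique ht ht0
  have hall : (fun u : H1 => (inner ℝ h u : ℝ)) = fun _ => (0 : ℝ) := by
    refine Continuous.ext_on S.sparse_dense (continuous_const.inner continuous_id)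
      continuous_const ?_
    rintro u hu
    simp only [Set.mem_iUnion, Set.mem_setOf_eq] at hu
    obtain ⟨k, f, hf, rfl⟩ := hu
    show (inner ℝ h (∑ n, S.j (f n)) : ℝ) = 0
    rw [inner_sum]
    exact Finset.sum_eq_zero fun n _ => hzero _ (Set.mem_iUnion.2 (hf n))
  have hzero' : h = 0 := by
    have := congrFun hall h
    exact inner_self_eq_zero.1 this
  rwa [hzero'] at hh

lemma sigma_res : ‖S.res x 1‖ = S.sigma x := by
  have : S.res x 1 = x - S.best x := rfl
  rw [this, S.sigma_eq (S.best_spec x)]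

lemma sum_ga_j_le (n : ℕ) :
    ∑ k ∈ Finset.Ico 2 n, ‖S.j (S.ga x k)‖ ≤ Real.sqrt S.aA * S.sigma x := by
  have hmul : 0 ≤ Real.sqrt S.aA := S.sqrt_aA_nonneg
  have hσ := S.sigma_nonneg x
  rcases le_or_gt n 2 with hn | hn
  · rw [Finset.Ico_eq_empty (by omega)]
    simpa using mul_nonneg hmul hσ
  · have key : ∑ k ∈ Finset.Ico 2 n, ‖S.j (S.ga x k)‖ ≤
        Real.sqrt S.aA * ∑ k ∈ Finset.Ico 1 (n - 1), ‖S.ga x k‖ := by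
      rw [Finset.sum_Ico_eq_sum_range, Finset.sum_Ico_eq_sum_range]
      have hcard : n - 1 - 1 = n - 2 := by omega
      rw [hcard, Finset.mul_sum]
      refine Finset.sum_le_sum fun i _ => ?_
      have h2i : 2 + i = (1 + i) + 1 := by omega
      rw [h2i]
      exact S.ga_j_le x (1 + i)
    refine key.trans ?_
    have hsum : ∑ k ∈ Finset.Ico 1 (n - 1), ‖S.ga x k‖ ≤ S.sigma x := by
      rw [← S.sigma_res x]
      exact S.sum_ga_norm_le x (by omega)
    nlinarith

lemma res_two_j_le : ‖S.j (S.res x 2)‖ ≤ Real.sqrt S.aA * S.sigma x := by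
  have hub : ∀ n ≥ 2, ‖S.j (S.res x 2)‖ - Real.sqrt S.aA * S.sigma x ≤ ‖S.j (S.res x n)‖ := by
    intro n hn
    have hdiff : ‖S.j (S.res x 2) - S.j (S.res x n)‖ ≤ Real.sqrt S.aA * S.sigma x := by
      rw [← map_sub, S.res_sub x hn, map_sum]
      exact (norm_sum_le _ _).trans (S.sum_ga_j_le x n)
    have htri := norm_sub_norm_le (S.j (S.res x 2)) (S.j (S.res x n))
    linarith
  have hnorm : Tendsto (fun n => ‖S.j (S.res x n)‖) atTop (𝓝 0) := by
    simpa using (S.res_j_tendsto_zero x).norm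
  have := ge_of_tendsto hnorm (eventually_atTop.2 ⟨2, hub⟩)
  linarith

end SparseApproxTriple

open Filter Topology


/-- Under the assumptions of Statement 16 together with
`γ₄ := γ_{F,T}(4A) < ∞`, the map `F` is almost linear on `A`:
`‖F(x) − F(y) − F(x−y)‖ ≤ 2γ₄‖x−y‖_{H1} + 2(γ₂ + γ₄)√a_A(σ_{A,M}(x) + σ_{A,M}(y))`. -/
theorem almost_linear_of_rip
    {H1 : Type*} [NormedAddCommGroup H1] [InnerProductSpace ℝ H1] [CompleteSpace H1]
    {H2 : Type*} [NormedAddCommGroup H2] [InnerProductSpace ℝ H2] [CompleteSpace H2]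
    {M : Type*} [NormedAddCommGroup M] [NormedSpace ℝ M] [CompleteSpace M]
    {I : Type*} (S : SparseApproxTriple H1 M I)
    (T : H1 →L[ℝ] H2) (δ : ℝ) (hδ0 : 0 ≤ δ) (hδ1 : δ < 1)
    (hRIP : ∀ z ∈ S.sumSet 2,
      (1 - δ) * ‖S.j z‖ ^ 2 ≤ ‖T (S.j z)‖ ^ 2 ∧ ‖T (S.j z)‖ ^ 2 ≤ (1 + δ) * ‖S.j z‖ ^ 2)
    (hδsmall : δ < Real.sqrt 2 / 2)
    (F : H1 → H2) (hFcont : Continuous F) (hF0 : F 0 = 0)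
    (γ₂ γ₄ : ℝ)
    (hγ₂ : ∀ x : M, ∀ z ∈ S.sumSet 2,
      ‖F (S.j x + S.j z) - F (S.j x) - T (S.j z)‖ ≤ γ₂ * ‖S.j z‖)
    (hγ₂lt : γ₂ < Real.sqrt 2 / 2 - Real.sqrt δ)
    (hγ₄ : ∀ x : M, ∀ z ∈ S.sumSet 4,
      ‖F (S.j x + S.j z) - F (S.j x) - T (S.j z)‖ ≤ γ₄ * ‖S.j z‖) :
    ∀ x y : M,
      ‖F (S.j x) - F (S.j y) - F (S.j x - S.j y)‖ ≤
        2 * γ₄ * ‖S.j x - S.j y‖ +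
          2 * (γ₂ + γ₄) * Real.sqrt S.aA * (S.sigma x + S.sigma y) := by
  intro x y
  by_cases hA : ∀ a ∈ S.A, a = (0 : M)
  · -- degenerate case: `A = {0}`, hence `H1` and `M` are trivial
    have hH1 : ∀ u : H1, u = 0 := by
      have hsub : (⋃ k : ℕ, {u : H1 | ∃ f : Fin (k + 1) → M,
          (∀ n, f n ∈ ⋃ i : I, (S.Asub i : Set M)) ∧ u = ∑ n, S.j (f n)}) ⊆ {0} := by
        rintro u hu
        simp only [Set.mem_iUnion, Set.mem_setOf_eq] at hu
        obtain ⟨k, f, hf, rfl⟩ := hu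
        have hz : ∀ n, S.j (f n) = 0 := fun n => by
          rw [hA (f n) (Set.mem_iUnion.2 (hf n)), map_zero]
        simp [hz]
      have huniv : (Set.univ : Set H1) ⊆ ({0} : Set H1) := by
        rw [← S.sparse_dense.closure_eq]
        have := closure_mono hsub
        rwa [closure_singleton] at this
      intro u
      exact huniv (Set.mem_univ u)
    have hM : ∀ m : M, m = 0 := fun m =>
      S.j_inj (show S.j m = S.j 0 by rw [map_zero]; exact hH1 _)
    have hσ : S.sigma (0 : M) = 0 := by
      rw [S.sigma_eq (S.best_spec 0), S.best_of_zero (S.best_spec 0), sub_zero, norm_zero]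
    rw [hM x, hM y]
    simp [hF0, hσ]
  · push_neg at hA
    obtain ⟨z₀, hz₀A, hz₀⟩ := hA
    -- membership helpers
    have mem2 : ∀ a ∈ S.A, ∀ b ∈ S.A, a - b ∈ S.sumSet 2 := by
      intro a ha b hb
      refine ⟨![a, -b], fun n => ?_, ?_⟩
      · fin_cases n
        · exact ha
        · exact S.neg_mem_A hb
      · rw [Fin.sum_univ_two]
        show a - b = a + -b
        abel
    have mem4 : ∀ a ∈ S.A, ∀ b ∈ S.A, ∀ c ∈ S.A, ∀ d ∈ S.A,
        (a + b) - (c + d) ∈ S.sumSet 4 := by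
      intro a ha b hb c hc d hd
      refine ⟨![a, b, -c, -d], fun n => ?_, ?_⟩
      · fin_cases n
        · exact ha
        · exact hb
        · exact S.neg_mem_A hc
        · exact S.neg_mem_A hd
      · rw [Fin.sum_univ_four]
        show (a + b) - (c + d) = a + b + -c + -d
        abel
    -- nonnegativity of the constants
    have hjz₀ : (0 : ℝ) < ‖S.j z₀‖ := by
      have : S.j z₀ ≠ 0 := fun h =>
        hz₀ (S.j_inj (show S.j z₀ = S.j 0 by rw [map_zero]; exact h))
      exact norm_pos_iff.2 this
    have hz₀2 : z₀ ∈ S.sumSet 2 := by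
      have := mem2 z₀ hz₀A 0 S.zero_mem_A
      rwa [sub_zero] at this
    have hz₀4 : z₀ ∈ S.sumSet 4 := by
      have := mem4 z₀ hz₀A 0 S.zero_mem_A 0 S.zero_mem_A 0 S.zero_mem_A
      rwa [add_zero, add_zero, sub_zero] at this
    have hγ₂0 : 0 ≤ γ₂ := by
      have h1 := hγ₂ 0 z₀ hz₀2
      have h2 := norm_nonneg (F (S.j 0 + S.j z₀) - F (S.j 0) - T (S.j z₀))
      nlinarith
    have hγ₄0 : 0 ≤ γ₄ := by
      have h1 := hγ₄ 0 z₀ hz₀4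
      have h2 := norm_nonneg (F (S.j 0 + S.j z₀) - F (S.j 0) - T (S.j z₀))
      nlinarith
    have hsa0 : 0 ≤ Real.sqrt S.aA := Real.sqrt_nonneg _
    have hσx := S.sigma_nonneg x
    have hσy := S.sigma_nonneg y
    -- the two-step sparse approximations
    set D : ℕ → M := fun n => S.res x n - S.res y n with hD
    set P : M := (S.ga x 0 + S.ga x 1) - (S.ga y 0 + S.ga y 1) with hP
    have hPmem : P ∈ S.sumSet 4 :=
      mem4 _ (S.ga_mem x 0) _ (S.ga_mem x 1) _ (S.ga_mem y 0) _ (S.ga_mem y 1)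
    have hxP : x - S.res x 2 = S.ga x 0 + S.ga x 1 := by
      have h := S.res_sub x (show (0:ℕ) ≤ 2 by norm_num)
      rw [← Finset.range_eq_Ico, S.res_zero x] at h
      rw [h]
      simp [Finset.sum_range_succ]
    have hyP : y - S.res y 2 = S.ga y 0 + S.ga y 1 := by
      have h := S.res_sub y (show (0:ℕ) ≤ 2 by norm_num)
      rw [← Finset.range_eq_Ico, S.res_zero y] at h
      rw [h]
      simp [Finset.sum_range_succ]
    have hPD : (x - y) - D 2 = P := by
      have : (x - y) - D 2 = (x - S.res x 2) - (y - S.res y 2) := by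
        simp only [hD]; abel
      rw [this, hxP, hyP]
    -- sum estimate
    have hsum : ∀ n : ℕ, ∑ k ∈ Finset.Ico 2 n, ‖S.j (S.ga x k - S.ga y k)‖ ≤
        Real.sqrt S.aA * (S.sigma x + S.sigma y) := by
      intro n
      have h1 : ∑ k ∈ Finset.Ico 2 n, ‖S.j (S.ga x k - S.ga y k)‖ ≤
          ∑ k ∈ Finset.Ico 2 n, (‖S.j (S.ga x k)‖ + ‖S.j (S.ga y k)‖) := by
        refine Finset.sum_le_sum fun k _ => ?_
        rw [map_sub]
        exact norm_sub_le _ _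
      rw [Finset.sum_add_distrib] at h1
      have h2 := S.sum_ga_j_le x n
      have h3 := S.sum_ga_j_le y n
      have : Real.sqrt S.aA * (S.sigma x + S.sigma y)
          = Real.sqrt S.aA * S.sigma x + Real.sqrt S.aA * S.sigma y := by ring
      rw [this]
      linarith
    -- chain estimate
    have chain : ∀ w : M, ‖F (S.j w + S.j (x - y)) - F (S.j w) - T (S.j (x - y))‖ ≤
        γ₄ * ‖S.j P‖ + γ₂ * (Real.sqrt S.aA * (S.sigma x + S.sigma y)) := by
      intro w
      have claim : ∀ n, 2 ≤ n → ‖F (S.j w + S.j (x - y)) - F (S.j (w + D n)) -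
          T (S.j ((x - y) - D n))‖ ≤
          γ₄ * ‖S.j P‖ + γ₂ * ∑ k ∈ Finset.Ico 2 n, ‖S.j (S.ga x k - S.ga y k)‖ := by
        intro n hn
        induction n, hn using Nat.le_induction with
        | base =>
            have happ := hγ₄ (w + D 2) P hPmem
            have he1 : S.j (w + D 2) + S.j P = S.j w + S.j (x - y) := by
              simp only [← map_add]
              congr 1
              rw [← hPD]; abel
            rw [hPD, ← he1, Finset.Ico_self, Finset.sum_empty, mul_zero, add_zero]
            exact happ
        | succ n hn2 ih =>
            have hmemn := mem2 _ (S.ga_mem x n) _ (S.ga_mem y n)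
            have hstep := hγ₂ (w + D (n + 1)) (S.ga x n - S.ga y n) hmemn
            have hDstep : D n = D (n + 1) + (S.ga x n - S.ga y n) := by
              simp only [hD, S.res_succ x n, S.res_succ y n]; abel
            have he1 : S.j (w + D (n + 1)) + S.j (S.ga x n - S.ga y n) = S.j (w + D n) := by
              simp only [← map_add]
              congr 1
              rw [hDstep]; abel
            have hsplit : F (S.j w + S.j (x - y)) - F (S.j (w + D (n + 1))) -
                T (S.j ((x - y) - D (n + 1)))
                = (F (S.j w + S.j (x - y)) - F (S.j (w + D n)) - T (S.j ((x - y) - D n)))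
                  + (F (S.j (w + D n)) - F (S.j (w + D (n + 1))) -
                      T (S.j (S.ga x n - S.ga y n))) := by
              have hT : T (S.j ((x - y) - D (n + 1)))
                  = T (S.j ((x - y) - D n)) + T (S.j (S.ga x n - S.ga y n)) := by
                rw [← map_add, ← map_add]
                congr 1
                rw [hDstep]; abel
              rw [hT]; abel
            rw [hsplit]
            refine (norm_add_le _ _).trans ?_
            have hb2 : ‖F (S.j (w + D n)) - F (S.j (w + D (n + 1))) -
                T (S.j (S.ga x n - S.ga y n))‖ ≤ γ₂ * ‖S.j (S.ga x n - S.ga y n)‖ := by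
              rw [← he1]
              exact hstep
            rw [Finset.sum_Ico_succ_top hn2, mul_add]
            linarith
      -- pass to the limit
      have hlim : Tendsto (fun n => F (S.j w + S.j (x - y)) - F (S.j (w + D n)) -
          T (S.j ((x - y) - D n))) atTop
          (𝓝 (F (S.j w + S.j (x - y)) - F (S.j w) - T (S.j (x - y)))) := by
        have hD0 : Tendsto (fun n => S.j (w + D n)) atTop (𝓝 (S.j w)) := by
          have heq : (fun n => S.j (w + D n)) =
              fun n => S.j w + (S.j (S.res x n) - S.j (S.res y n)) := by
            funext n
            simp only [hD, map_add, map_sub]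
          rw [heq]
          have h0 : Tendsto (fun n => S.j (S.res x n) - S.j (S.res y n)) atTop (𝓝 0) := by
            simpa using (S.res_j_tendsto_zero x).sub (S.res_j_tendsto_zero y)
          simpa using tendsto_const_nhds.add h0
        have hD1 : Tendsto (fun n => S.j ((x - y) - D n)) atTop (𝓝 (S.j (x - y))) := by
          have heq : (fun n => S.j ((x - y) - D n)) =
              fun n => S.j (x - y) - (S.j (S.res x n) - S.j (S.res y n)) := by
            funext n
            simp only [hD, map_sub]
          rw [heq]
          have h0 : Tendsto (fun n => S.j (S.res x n) - S.j (S.res y n)) atTop (𝓝 0) := by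
            simpa using (S.res_j_tendsto_zero x).sub (S.res_j_tendsto_zero y)
          simpa using tendsto_const_nhds.sub h0
        have hF : Tendsto (fun n => F (S.j (w + D n))) atTop (𝓝 (F (S.j w))) :=
          (hFcont.tendsto (S.j w)).comp hD0
        have hT : Tendsto (fun n => T (S.j ((x - y) - D n))) atTop (𝓝 (T (S.j (x - y)))) :=
          (T.continuous.tendsto (S.j (x - y))).comp hD1
        exact (tendsto_const_nhds.sub hF).sub hT
      refine le_of_tendsto hlim.norm (eventually_atTop.2 ⟨2, fun n hn => ?_⟩)
      refine (claim n hn).trans ?_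
      have := hsum n
      nlinarith
    -- assemble
    have hBx := chain y
    have hB0 := chain 0
    have hxy1 : S.j y + S.j (x - y) = S.j x := by
      rw [← map_add]; congr 1; abel
    have hxy0 : S.j (0 : M) + S.j (x - y) = S.j (x - y) := by
      rw [map_zero, zero_add]
    rw [hxy1] at hBx
    rw [hxy0, map_zero, hF0] at hB0
    have hmapsub : S.j (x - y) = S.j x - S.j y := map_sub S.j x y
    have htri : ‖F (S.j x) - F (S.j y) - F (S.j x - S.j y)‖ ≤
        ‖F (S.j x) - F (S.j y) - T (S.j (x - y))‖ +
          ‖F (S.j (x - y)) - 0 - T (S.j (x - y))‖ := by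
      have heq : F (S.j x) - F (S.j y) - F (S.j x - S.j y) =
          (F (S.j x) - F (S.j y) - T (S.j (x - y))) -
            (F (S.j (x - y)) - 0 - T (S.j (x - y))) := by
        rw [hmapsub]; abel
      rw [heq]
      exact norm_sub_le _ _
    have hjP : ‖S.j P‖ ≤ ‖S.j x - S.j y‖ + Real.sqrt S.aA * (S.sigma x + S.sigma y) := by
      have hPeq : S.j P = S.j (x - y) - (S.j (S.res x 2) - S.j (S.res y 2)) := by
        rw [← hPD]
        simp only [hD, map_sub]
      have h2x := S.res_two_j_le x
      have h2y := S.res_two_j_le y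
      calc ‖S.j P‖ ≤ ‖S.j (x - y)‖ + ‖S.j (S.res x 2) - S.j (S.res y 2)‖ := by
            rw [hPeq]; exact norm_sub_le _ _
        _ ≤ ‖S.j (x - y)‖ + (‖S.j (S.res x 2)‖ + ‖S.j (S.res y 2)‖) := by
            have := norm_sub_le (S.j (S.res x 2)) (S.j (S.res y 2))
            linarith
        _ ≤ ‖S.j x - S.j y‖ + Real.sqrt S.aA * (S.sigma x + S.sigma y) := by
            rw [hmapsub]
            have : Real.sqrt S.aA * (S.sigma x + S.sigma y)
                = Real.sqrt S.aA * S.sigma x + Real.sqrt S.aA * S.sigma y := by ring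
            linarith [this]
    have hfinal : ‖F (S.j x) - F (S.j y) - F (S.j x - S.j y)‖ ≤
        2 * (γ₄ * ‖S.j P‖ + γ₂ * (Real.sqrt S.aA * (S.sigma x + S.sigma y))) := by
      linarith
    refine hfinal.trans ?_
    nlinarith [mul_le_mul_of_nonneg_left hjP hγ₄0]
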